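/- arXiv:1408.0190 — 2 statements merged into one kernel-verified Lean document; each statement's English description precedes it below -/
import Mathlib

section
/- For an admissible linear chain A with adjoint A*, one has d(A) = d(A*) and moreover d(A) = d(overline{A*}) + d(underline{A}), where overline removes the first entry and underline removes the last entry. -/
/-- The tridiagonal matrix of a linear chain: diagonal entries from the list,
entries `-1` on the first sub- and super-diagonals, `0` elsewhere. -/
def chainMatrix (l : List ℤ) : Matrix (Fin l.length) (Fin l.length) ℤ :=
  fun i j =>
    if i = j then l.get i
    else if (i : ℕ) + 1 = (j : ℕ) ∨ (j : ℕ) + 1 = (i : ℕ) then -1 else 0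

/-- The discriminant of a linear chain. -/
def disc (l : List ℤ) : ℤ := (chainMatrix l).det

/-- A linear chain is admissible if it is nonempty and all entries are ≥ 2. -/
def Admissible (l : List ℤ) : Prop := l ≠ [] ∧ ∀ a ∈ l, 2 ≤ a

/-- The inductance of a chain. -/
def ind (l : List ℤ) : ℚ := (disc l.tail : ℚ) / (disc l : ℚ)

/-- `B` is the adjoint of `A`. -/
def IsAdjoint (A B : List ℤ) : Prop := Admissible B ∧ ind B = 1 - ind A.reverse

lemma disc_nil : disc [] = 1 := by
  simp [disc, Matrix.det_fin_zero]

lemma disc_singleton (a : ℤ) : disc [a] = a := by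
  simp [disc, Matrix.det_fin_one, chainMatrix]

lemma chainMatrix_cons_succ (a : ℤ) (l : List ℤ) (i j : Fin l.length) :
    chainMatrix (a :: l) i.succ j.succ = chainMatrix l i j := by
  have hi := i.isLt
  simp only [chainMatrix, Fin.val_succ, Fin.succ_inj, List.get_cons_succ]
  have h1 : ((i:ℕ)+1+1 = (j:ℕ)+1 ∨ (j:ℕ)+1+1 = (i:ℕ)+1) ↔ ((i:ℕ)+1 = j ∨ (j:ℕ)+1 = i) := by omega
  simp only [h1]
  by_cases h : i = j
  · subst h
    rw [if_pos rfl, if_pos rfl]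
    simp [List.get_eq_getElem]
  · rw [if_neg h, if_neg h]

lemma submatrix_cons (a : ℤ) (l : List ℤ) :
    (chainMatrix (a :: l)).submatrix Fin.succ Fin.succ = chainMatrix l := by
  ext i j
  exact chainMatrix_cons_succ a l i j

lemma disc_cons (a b : ℤ) (t : List ℤ) :
    disc (a :: b :: t) = a * disc (b :: t) - disc t := by
  have h0 := Matrix.det_succ_row_zero (chainMatrix (a :: b :: t))
  rw [disc]
  erw [h0]
  simp only [List.length_cons]
  rw [Fin.sum_univ_succ, Fin.sum_univ_succ]
  have e00 : chainMatrix (a :: b :: t) (0 : Fin ((b::t).length + 1)) (0 : Fin ((b::t).length + 1)) = a := by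
    simp [chainMatrix]
  have e01 : chainMatrix (a :: b :: t) (0 : Fin ((b::t).length + 1)) (Fin.succ (0 : Fin (t.length + 1))) = -1 := by
    rw [chainMatrix, if_neg (by simp [Fin.ext_iff]), if_pos (by simp)]
  have e0far : ∀ j : Fin t.length, chainMatrix (a :: b :: t) (0 : Fin ((b::t).length + 1)) j.succ.succ = 0 := by
    intro j
    rw [chainMatrix, if_neg (by simp [Fin.ext_iff]), if_neg (by simp [Fin.ext_iff])]
  have esub0 : ((chainMatrix (a :: b :: t)).submatrix Fin.succ (Fin.succAbove 0)).det
      = disc (b :: t) := by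
    rw [Fin.succAbove_zero, submatrix_cons]; rfl
  have esub1 : ((chainMatrix (a :: b :: t)).submatrix Fin.succ
      (Fin.succ (0 : Fin (t.length + 1))).succAbove).det = - disc t := by
    set M := chainMatrix (a :: b :: t)
    set N := M.submatrix Fin.succ (Fin.succ (0 : Fin (t.length + 1))).succAbove with hN
    have hcol0 : (Fin.succ (0 : Fin (t.length + 1))).succAbove (0 : Fin (t.length + 1)) = 0 := by
      rw [Fin.succAbove_of_castSucc_lt _ _ (by simp), Fin.castSucc_zero]
    have hcolsucc : ∀ j : Fin t.length,
        (Fin.succ (0 : Fin (t.length + 1))).succAbove j.succ = j.succ.succ := by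
      intro j
      rw [Fin.succAbove_of_le_castSucc]
      simp [Fin.le_def]
    have hN00 : N (0 : Fin (t.length + 1)) (0 : Fin (t.length + 1)) = -1 := by
      rw [hN, Matrix.submatrix_apply, hcol0]
      show chainMatrix (a :: b :: t) (Fin.succ (0 : Fin (t.length + 1))) (0 : Fin (t.length + 2)) = -1
      rw [chainMatrix, if_neg (by simp [Fin.ext_iff]), if_pos (by simp)]
    have hNs0 : ∀ i : Fin t.length, N i.succ (0 : Fin (t.length + 1)) = 0 := by
      intro i
      rw [hN, Matrix.submatrix_apply, hcol0]
      show chainMatrix (a :: b :: t) i.succ.succ (0 : Fin (t.length + 2)) = 0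
      rw [chainMatrix, if_neg (by simp [Fin.ext_iff]), if_neg (by simp [Fin.ext_iff])]
    have hminor : (N.submatrix (Fin.succAbove 0) Fin.succ) = chainMatrix t := by
      ext i j
      rw [Matrix.submatrix_apply, Fin.succAbove_zero, hN, Matrix.submatrix_apply, hcolsucc]
      show chainMatrix (a :: b :: t) i.succ.succ j.succ.succ = chainMatrix t i j
      rw [chainMatrix_cons_succ, chainMatrix_cons_succ]
    rw [Matrix.det_succ_column_zero, Fin.sum_univ_succ, hN00, hminor]
    simp only [hNs0]
    simp [disc]
  rw [e00, e01]
  erw [esub0, esub1]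
  simp only [e0far, mul_zero, zero_mul, Finset.sum_const_zero, add_zero]
  simp
  ring

lemma disc_reverse (l : List ℤ) : disc l.reverse = disc l := by
  have hlen : l.reverse.length = l.length := l.length_reverse
  let e : Fin l.reverse.length ≃ Fin l.length := finCongr hlen
  have key : chainMatrix l.reverse =
      (chainMatrix l).submatrix (fun i => ⇑(e.trans Fin.revPerm) i)
        (fun j => ⇑(e.trans Fin.revPerm) j) := by
    ext i j
    have hi : (i : ℕ) < l.length := hlen ▸ i.isLt
    have hj : (j : ℕ) < l.length := hlen ▸ j.isLt
    simp only [Matrix.submatrix_apply, Equiv.trans_apply, Fin.revPerm_apply]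
    have hvi : ((Fin.rev (e i)) : ℕ) = l.length - ((i:ℕ)+1) := by
      simp [Fin.val_rev, e]
    have hvj : ((Fin.rev (e j)) : ℕ) = l.length - ((j:ℕ)+1) := by
      simp [Fin.val_rev, e]
    rw [chainMatrix, chainMatrix]
    by_cases hij : i = j
    · subst hij
      rw [if_pos rfl, if_pos rfl]
      simp only [List.get_eq_getElem, List.getElem_reverse]
      have hidx : l.length - 1 - (i:ℕ) = ((Fin.rev (e i)) : ℕ) := by omega
      congr 1
    · have hne : (i:ℕ) ≠ (j:ℕ) := fun h => hij (Fin.ext h)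
      have hij' : ¬ (Fin.rev (e i) = Fin.rev (e j)) := by
        rw [Fin.ext_iff, hvi, hvj]
        omega
      rw [if_neg hij, if_neg hij']
      have hcond : ((i:ℕ)+1 = (j:ℕ) ∨ (j:ℕ)+1 = (i:ℕ)) ↔
          (((Fin.rev (e i)):ℕ)+1 = ((Fin.rev (e j)):ℕ) ∨
           ((Fin.rev (e j)):ℕ)+1 = ((Fin.rev (e i)):ℕ)) := by
        rw [hvi, hvj]
        omega
      exact if_congr hcond rfl rfl
  have h2 : disc l.reverse = ((chainMatrix l).submatrix ⇑(e.trans Fin.revPerm)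
      ⇑(e.trans Fin.revPerm)).det := by rw [disc, key]
  rw [h2, Matrix.det_submatrix_equiv_self]
  rfl

lemma disc_pos_aux : ∀ (l : List ℤ), (∀ a ∈ l, 2 ≤ a) → l ≠ [] →
    0 < disc l.tail ∧ disc l.tail < disc l := by
  intro l
  induction l with
  | nil => intro _ h; exact absurd rfl h
  | cons a t ih =>
    intro h _
    have ha : 2 ≤ a := h a (by simp)
    cases t with
    | nil =>
      simp only [List.tail_cons, disc_nil, disc_singleton]
      omega
    | cons b s =>
      have ht := ih (fun x hx => h x (List.mem_cons_of_mem _ hx)) (by simp)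
      simp only [List.tail_cons] at ht ⊢
      have hrec := disc_cons a b s
      constructor
      · linarith [ht.1, ht.2]
      · nlinarith [ht.1, ht.2]

lemma disc_coprime : ∀ (l : List ℤ), IsCoprime (disc l) (disc l.tail) := by
  intro l
  induction l with
  | nil => simp only [List.tail_nil, disc_nil]; exact isCoprime_one_left
  | cons a t ih =>
    cases t with
    | nil =>
      simp only [List.tail_cons, disc_nil]
      exact isCoprime_one_right
    | cons b s =>
      simp only [List.tail_cons] at ih ⊢
      have hrec : disc (a :: b :: s) = -disc s + disc (b :: s) * a := by
        rw [disc_cons]; ring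
      rw [hrec]
      exact (ih.symm.neg_left).add_mul_left_left a

theorem disc_adjoint (A B : List ℤ) (hA : Admissible A) (hB : IsAdjoint A B) :
    disc A = disc B ∧ disc A = disc B.tail + disc A.dropLast := by
  obtain ⟨hAne, hA2⟩ := hA
  obtain ⟨⟨hBne, hB2⟩, hind⟩ := hB
  have hArev_ne : A.reverse ≠ [] := by simpa using hAne
  have hA2' : ∀ a ∈ A.reverse, 2 ≤ a := fun a ha => hA2 a (List.mem_reverse.mp ha)
  have hrev : disc A.reverse = disc A := disc_reverse A
  have htail : disc A.reverse.tail = disc A.dropLast := by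
    rw [List.tail_reverse, disc_reverse]
  obtain ⟨hu, huv⟩ := disc_pos_aux A.reverse hA2' hArev_ne
  rw [htail] at hu
  rw [htail, hrev] at huv
  obtain ⟨hx, hxy⟩ := disc_pos_aux B hB2 hBne
  set v := disc A with hv
  set u := disc A.dropLast with hud
  set y := disc B with hy
  set x := disc B.tail with hx'
  have hvpos : 0 < v := lt_trans hu huv
  have hypos : 0 < y := lt_trans hx hxy
  have hq : (x : ℚ) / y = 1 - (u : ℚ) / v := by
    have := hind
    rw [ind, ind, hrev, htail] at this
    exact this
  have hcross : x * v = (v - u) * y := by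
    have hvQ : (v : ℚ) ≠ 0 := Int.cast_ne_zero.mpr (ne_of_gt hvpos)
    have hyQ : (y : ℚ) ≠ 0 := Int.cast_ne_zero.mpr (ne_of_gt hypos)
    field_simp at hq
    rw [mul_comm (v - u) y]
    exact_mod_cast hq
  have copA : IsCoprime v u := by
    have := disc_coprime A.reverse
    rw [hrev, htail] at this
    exact this
  have copB : IsCoprime y x := disc_coprime B
  have copA' : IsCoprime v (v - u) := by
    have h1 : IsCoprime v (-u) := copA.neg_right
    have h2 := h1.add_mul_left_right 1
    have : -u + v * 1 = v - u := by ring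
    rwa [this] at h2
  have hyv : y ∣ v := by
    have hdvd : y ∣ x * v := ⟨v - u, by linarith [hcross]⟩
    exact (copB.symm).symm.dvd_of_dvd_mul_left hdvd
  have hvy : v ∣ y := by
    have hdvd : v ∣ (v - u) * y := ⟨x, by linarith [hcross]⟩
    exact copA'.dvd_of_dvd_mul_left hdvd
  have hyv' : v = y := (Int.dvd_antisymm hvpos.le hypos.le hvy hyv)
  constructor
  · exact hyv'
  · have : x * v = (v - u) * v := by rw [hcross, hyv']
    have hxvu : x = v - u := mul_right_cancel₀ (ne_of_gt hvpos) this
    omega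
end

section
/- Let A = [a_1+1, ..., a_r+1] with a_1, ..., a_r positive integers. Then the adjoint satisfies A* = [2_{a_r}] ∗ [2_{a_{r-1}}] ∗ ... ∗ [2_{a_1}], where [2_m] denotes the chain of m twos and ∗ is the chain-joining operation. -/
lemma submatrix_succ (x : ℤ) (l : List ℤ) :
    (chainMatrix (x :: l)).submatrix Fin.succ Fin.succ = chainMatrix l := by
  ext i j
  simp only [Matrix.submatrix_apply, chainMatrix, Fin.succ_inj, Fin.val_succ]
  have : ((i : ℕ) + 1 + 1 = (j : ℕ) + 1 ∨ (j : ℕ) + 1 + 1 = (i : ℕ) + 1) ↔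
      ((i : ℕ) + 1 = (j : ℕ) ∨ (j : ℕ) + 1 = (i : ℕ)) := by omega
  rw [if_congr Iff.rfl rfl (if_congr this rfl rfl)]
  split_ifs <;> rfl

lemma disc_cons_cons (a b : ℤ) (l : List ℤ) :
    disc (a :: b :: l) = a * disc (b :: l) - disc l := by
  haveI : NeZero (a :: b :: l).length := ⟨by simp⟩
  haveI : NeZero (b :: l).length := ⟨by simp⟩
  show (chainMatrix (a :: b :: l)).det = _
  rw [Matrix.det_succ_row_zero, Fin.sum_univ_succ,
    Finset.sum_eq_single (0 : Fin (b :: l).length)]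
  · have h00 : chainMatrix (a :: b :: l) 0 0 = a := by simp [chainMatrix]
    have h01 : chainMatrix (a :: b :: l) 0 (0 : Fin (b :: l).length).succ = -1 := by
      simp only [chainMatrix, Fin.ext_iff, Fin.val_succ, Fin.val_zero]
      rw [if_neg (by simp), if_pos (by simp)]
    have hA : ((chainMatrix (a :: b :: l)).submatrix Fin.succ
        (Fin.succAbove 0)).det = disc (b :: l) := by
      rw [Fin.succAbove_zero, submatrix_succ]; rfl
    have hN : ((chainMatrix (a :: b :: l)).submatrix Fin.succ
        (Fin.succAbove (0 : Fin (b :: l).length).succ)).det = - disc l := by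
      haveI : NeZero l.length.succ := ⟨by simp⟩
      rw [Matrix.det_succ_column_zero, Fin.sum_univ_succ]
      have htail : ∀ i : Fin l.length,
          (-1 : ℤ) ^ ((i.succ : Fin l.length.succ) : ℕ) *
            (chainMatrix (a :: b :: l)).submatrix Fin.succ
              (Fin.succAbove (0 : Fin (b :: l).length).succ) i.succ 0 *
            (((chainMatrix (a :: b :: l)).submatrix Fin.succ
              (Fin.succAbove (0 : Fin (b :: l).length).succ)).submatrix
              i.succ.succAbove Fin.succ).det = 0 := by
        intro i
        rw [Matrix.submatrix_apply, Fin.succ_succAbove_zero]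
        have h1 : chainMatrix (a :: b :: l) i.succ.succ 0 = 0 := by
          simp only [chainMatrix, Fin.ext_iff, Fin.val_succ, Fin.val_zero]
          exact if_neg (by omega)
        rw [h1]; ring
      rw [Finset.sum_congr rfl fun i _ => htail i, Finset.sum_const, smul_zero, add_zero,
        Matrix.submatrix_apply, Fin.succ_succAbove_zero]
      have h10 : chainMatrix (a :: b :: l) (0 : Fin (b :: l).length).succ 0 = -1 := by
        simp only [chainMatrix, Fin.ext_iff, Fin.val_succ, Fin.val_zero]
        rw [if_neg (by simp), if_pos (by simp)]
      have hc : Fin.succAbove (0 : Fin (b :: l).length).succ ∘ Fin.succ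
          = Fin.succ ∘ Fin.succ := by
        funext j
        show (Fin.succ 0).succAbove j.succ = _
        rw [Fin.succ_succAbove_succ, Fin.succAbove_zero]
        rfl
      rw [h10, Fin.succAbove_zero, Matrix.submatrix_submatrix, hc,
        ← Matrix.submatrix_submatrix, submatrix_succ, submatrix_succ]
      show (-1 : ℤ) ^ ((0 : Fin l.length.succ) : ℕ) * _ * _ = _
      simp [disc]
    rw [h00, h01, hA, hN]
    simp
    ring
  · intro i _ hi
    have hv : (i : ℕ) ≠ 0 := fun h => hi (Fin.ext h)
    have h1 : chainMatrix (a :: b :: l) 0 i.succ = 0 := by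
      simp only [chainMatrix, Fin.ext_iff, Fin.val_succ, Fin.val_zero]
      rw [if_neg (by omega)]; exact if_neg (by omega)
    rw [h1]; ring
  · intro h; exact absurd (Finset.mem_univ _) h

/-- The joining operation on nonempty linear chains. -/
def join (A B : List ℤ) : List ℤ := A.dropLast ++ [A.getLast! + B.head! - 1] ++ B.tail

/-- Join a list of chains together. -/
def joinAll : List (List ℤ) → List ℤ
  | [] => []
  | [x] => x
  | x :: xs => join x (joinAll xs)

/-- positivity and monotonicity of `disc` for chains with entries `≥ 2`. -/
lemma disc_facts : ∀ l : List ℤ, (∀ x ∈ l, 2 ≤ x) →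
    0 < disc l ∧ (l ≠ [] → disc l.tail < disc l)
  | [], _ => by simp [disc_nil]
  | [a], h => by
      have ha : 2 ≤ a := h a (by simp)
      simp [disc_singleton, disc_nil]
      omega
  | (a :: b :: l), h => by
      have ha : 2 ≤ a := h a (by simp)
      obtain ⟨h1, h2⟩ := disc_facts (b :: l) (fun x hx => h x (by simp [hx]))
      have h2' := h2 (by simp)
      rw [List.tail_cons] at h2' ⊢
      constructor
      · rw [disc_cons_cons]; nlinarith
      · intro _; rw [disc_cons_cons]; nlinarith

lemma disc_pos (l : List ℤ) (h : ∀ x ∈ l, 2 ≤ x) : 0 < disc l := (disc_facts l h).1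

lemma ind_bounds (l : List ℤ) (h2 : ∀ x ∈ l, 2 ≤ x) (hne : l ≠ []) :
    0 < ind l ∧ ind l < 1 := by
  have hl := disc_pos l h2
  have ht := disc_pos l.tail (fun x hx => h2 x (List.mem_of_mem_tail hx))
  have hlt := (disc_facts l h2).2 hne
  rw [ind]
  constructor
  · exact div_pos (by exact_mod_cast ht) (by exact_mod_cast hl)
  · rw [div_lt_one (by exact_mod_cast hl)]
    exact_mod_cast hlt

lemma ind_cons_cons (a b : ℤ) (l : List ℤ) (h : disc (b :: l) ≠ 0) :
    ind (a :: b :: l) = 1 / ((a : ℚ) - ind (b :: l)) := by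
  have hd := disc_cons_cons a b l
  have h' : ((disc (b :: l) : ℚ)) ≠ 0 := by exact_mod_cast h
  rw [ind, ind, List.tail_cons, List.tail_cons, hd]
  push_cast
  rcases eq_or_ne ((a : ℚ) * (disc (b::l) : ℚ) - (disc l : ℚ)) 0 with h0 | h0
  · have ha : (a : ℚ) - (disc l : ℚ) / (disc (b::l) : ℚ) = 0 := by
      rw [sub_eq_zero, eq_div_iff h']
      linarith
    rw [h0, div_zero, ha, div_zero]
  · have hb : (a : ℚ) - (disc l : ℚ) / (disc (b::l) : ℚ) ≠ 0 := by
      intro hc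
      apply h0
      rw [sub_eq_zero] at hc
      rw [hc]
      field_simp
      ring
    rw [div_eq_div_iff h0 hb]
    field_simp

lemma disc_shift (h : ℤ) (t : List ℤ) :
    disc ((h + 1) :: t) = disc (h :: t) + disc t := by
  cases t with
  | nil => simp [disc_singleton, disc_nil]
  | cons c t' => rw [disc_cons_cons, disc_cons_cons]; ring

lemma ind_shift (h : ℤ) (t : List ℤ) (h2 : ∀ x ∈ h :: t, 2 ≤ x) :
    1 / (1 - ind ((h + 1) :: t)) = 1 + ind (h :: t) := by
  have h2' : ∀ x ∈ (h + 1) :: t, 2 ≤ x := by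
    intro x hx
    rcases List.mem_cons.1 hx with rfl | hx
    · have := h2 h (by simp); omega
    · exact h2 x (by simp [hx])
  have hD : (0:ℚ) < (disc (h :: t) : ℚ) := by exact_mod_cast disc_pos _ h2
  have hd : (0:ℚ) < (disc t : ℚ) := by
    exact_mod_cast disc_pos t (fun x hx => h2 x (by simp [hx]))
  rw [ind, ind, List.tail_cons, List.tail_cons, disc_shift]
  push_cast
  have e1 : 1 - (disc t : ℚ) / ((disc (h :: t) : ℚ) + (disc t : ℚ))
      = (disc (h :: t) : ℚ) / ((disc (h :: t) : ℚ) + (disc t : ℚ)) := by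
    field_simp
    ring
  rw [e1, one_div_div, add_div, div_self (ne_of_gt hD)]

lemma twos_aux (k : ℕ) (l : List ℤ) (h2 : ∀ x ∈ l, 2 ≤ x) (hne : l ≠ []) :
    1 / (1 - ind (List.replicate k 2 ++ l)) = k + 1 / (1 - ind l) := by
  induction k with
  | zero => simp
  | succ k ih =>
    have hL2 : ∀ x ∈ List.replicate k 2 ++ l, 2 ≤ x := by
      intro x hx
      rcases List.mem_append.1 hx with hx | hx
      · rw [List.eq_of_mem_replicate hx]
      · exact h2 x hx
    have hLne : List.replicate k 2 ++ l ≠ [] := by simp [hne]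
    obtain ⟨c, L', hcl⟩ := List.exists_cons_of_ne_nil hLne
    have hpos := disc_pos _ hL2
    have hbd := ind_bounds _ hL2 hLne
    rw [List.replicate_succ, List.cons_append]
    rw [hcl] at hpos ⊢
    rw [ind_cons_cons _ _ _ (ne_of_gt hpos), ← hcl]
    set x := ind (List.replicate k 2 ++ l) with hx
    have ih' : 1 / (1 - ind l) = 1 / (1 - x) - k := by linarith
    rw [ih']
    have hx1 : x < 1 := hbd.2
    have hx0 : 0 < x := hbd.1
    have e1 : (2:ℚ) - x ≠ 0 := by linarith
    have e2 : (1:ℚ) - x ≠ 0 := by linarith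
    have e3 : (1:ℚ) - 1/(2 - x) ≠ 0 := by
      rw [one_sub_div e1]
      intro hc
      rw [div_eq_zero_iff] at hc
      rcases hc with hc | hc
      · apply e2; linarith
      · exact e1 hc
    have e4 : 1 - 1/((2:ℚ) - x) = (1 - x)/(2 - x) := by
      rw [one_sub_div e1]
      congr 1
      ring
    rw [show ((2:ℤ):ℚ) = (2:ℚ) from by norm_num, e4, one_div_div, div_eq_iff e2]
    push_cast
    rw [one_div]
    field_simp
    ring

lemma ind_singleton (x : ℤ) : ind [x] = 1 / (x : ℚ) := by
  rw [ind, List.tail_cons, disc_nil, disc_singleton]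
  norm_num

lemma disc_replicate : ∀ m : ℕ, disc (List.replicate m 2) = m + 1
  | 0 => by simp [disc_nil]
  | 1 => by simp [List.replicate_succ, disc_singleton]
  | (m+2) => by
      rw [List.replicate_succ, List.replicate_succ, disc_cons_cons,
        ← List.replicate_succ, disc_replicate (m+1), disc_replicate m]
      push_cast
      ring

lemma ind_replicate (a : ℕ) (ha : 0 < a) :
    ind (List.replicate a (2:ℤ)) = (a : ℚ) / ((a : ℚ) + 1) := by
  rw [ind, List.tail_replicate, disc_replicate, disc_replicate]
  have h1 : ((a - 1 : ℕ) : ℤ) + 1 = (a : ℤ) := by omega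
  rw [h1]
  push_cast
  rfl

lemma main_lemma : ∀ bs : List ℕ, bs ≠ [] → (∀ a ∈ bs, 0 < a) →
    Admissible (joinAll (bs.map fun a => List.replicate a (2:ℤ))) ∧
    ind (joinAll (bs.map fun a => List.replicate a (2:ℤ)))
      = 1 - ind (bs.map (fun a : ℕ => (a:ℤ)+1))
  | [], h, _ => absurd rfl h
  | [a], _, hpos => by
      have ha : 0 < a := hpos a (by simp)
      have hrep : joinAll ([a].map fun a => List.replicate a (2:ℤ))
          = List.replicate a (2:ℤ) := rfl
      rw [hrep]
      refine ⟨⟨?_, ?_⟩, ?_⟩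
      · have : a ≠ 0 := by omega
        simp [this]
      · intro x hx
        rw [List.eq_of_mem_replicate hx]
      · rw [ind_replicate a ha, List.map_cons, List.map_nil, ind_singleton]
        have hne : ((a:ℚ) + 1) ≠ 0 := by positivity
        push_cast
        rw [eq_sub_iff_add_eq, ← add_div, div_eq_one_iff_eq hne]
  | (a :: b :: bs), _, hpos => by
      have ha : 0 < a := hpos a (by simp)
      obtain ⟨hadm, hind⟩ := main_lemma (b :: bs) (by simp)
        (fun x hx => hpos x (List.mem_cons_of_mem _ hx))
      obtain ⟨hCne, hC2⟩ := hadm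
      obtain ⟨h, t, hht⟩ := List.exists_cons_of_ne_nil hCne
      have hh2 : 2 ≤ h := hC2 h (by rw [hht]; simp)
      have ht2 : ∀ x ∈ h :: t, 2 ≤ x := by
        intro x hx
        exact hC2 x (by rw [hht]; exact hx)
      obtain ⟨k, rfl⟩ : ∃ k, a = k + 1 := ⟨a - 1, by omega⟩
      have hjoin : joinAll (((k+1) :: b :: bs).map fun a => List.replicate a (2:ℤ))
          = List.replicate k 2 ++ ((h+1) :: t) := by
        show join (List.replicate (k+1) 2)
          (joinAll ((b :: bs).map fun a => List.replicate a (2:ℤ))) = _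
        rw [join, hht, List.replicate_succ', List.dropLast_concat]
        have hlast : (List.replicate k (2:ℤ) ++ [2]).getLast! = 2 :=
          List.getLast!_of_getLast? List.getLast?_concat
        rw [hlast]
        show List.replicate k 2 ++ [2 + h - 1] ++ t = _
        rw [show (2:ℤ) + h - 1 = h + 1 by ring, List.append_assoc, List.singleton_append]
      rw [hjoin]
      have hD2 : ∀ x ∈ List.replicate k (2:ℤ) ++ ((h+1) :: t), 2 ≤ x := by
        intro x hx
        rcases List.mem_append.1 hx with hx | hx
        · rw [List.eq_of_mem_replicate hx]
        · rcases List.mem_cons.1 hx with rfl | hx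
          · omega
          · exact ht2 x (List.mem_cons_of_mem _ hx)
      have hs2 : ∀ x ∈ (h+1) :: t, 2 ≤ x := by
        intro x hx
        rcases List.mem_cons.1 hx with rfl | hx
        · omega
        · exact ht2 x (List.mem_cons_of_mem _ hx)
      refine ⟨⟨by simp, hD2⟩, ?_⟩
      -- the inductance computation
      have e := twos_aux k ((h+1) :: t) hs2 (by simp)
      rw [ind_shift h t ht2] at e
      rw [← hht, hind] at e
      -- bounds
      have hDbd := ind_bounds _ hD2 (by simp)
      have hLadm : ∀ x ∈ (b :: bs).map (fun a : ℕ => (a:ℤ)+1), 2 ≤ x := by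
        intro x hx
        obtain ⟨c, hc, rfl⟩ := List.mem_map.1 hx
        have := hpos c (List.mem_cons_of_mem _ hc)
        omega
      have hgbd := ind_bounds _ hLadm (by simp)
      set g := ind ((b :: bs).map (fun a : ℕ => (a:ℤ)+1)) with hg
      set u := ind (List.replicate k (2:ℤ) ++ ((h+1) :: t)) with hu
      -- e : 1 / (1 - u) = k + (1 + (1 - g))
      rw [List.map_cons]
      have hdpos : disc ((b :: bs).map (fun a : ℕ => (a:ℤ)+1)) > 0 := disc_pos _ hLadm
      obtain ⟨c, L', hcl⟩ := List.exists_cons_of_ne_nil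
        (show (b :: bs).map (fun a : ℕ => (a:ℤ)+1) ≠ [] by simp)
      rw [hcl] at hdpos
      rw [show ((b :: bs).map fun a : ℕ => (a:ℤ)+1) = c :: L' from hcl] -- expose cons
      rw [ind_cons_cons _ _ _ (ne_of_gt hdpos), ← hcl, ← hg]
      have hu1 : u < 1 := hDbd.2
      have h1u : (1:ℚ) - u ≠ 0 := by linarith
      push_cast
      have h2g : (k:ℚ) + 1 + 1 - g = 1/(1-u) := by rw [e]; ring
      rw [h2g, one_div_one_div]
      ring

lemma coe_list_eq (bs : List ℕ) :
    (do let a ← bs; pure ((a:ℤ))) = bs.map (fun a : ℕ => (a:ℤ)) := by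
  induction bs with
  | nil => rfl
  | cons c cs ih => simpa using ih

theorem adjoint_formula (as : List ℕ) (has : as ≠ []) (hpos : ∀ a ∈ as, 0 < a) :
    IsAdjoint (as.map fun a => (a : ℤ) + 1)
      (joinAll (as.reverse.map fun a => List.replicate a (2 : ℤ))) := by
  have h := main_lemma as.reverse (by simpa using has)
    (fun a ha => hpos a (List.mem_reverse.1 ha))
  refine ⟨h.1, ?_⟩
  rw [coe_list_eq, List.map_map, ← List.map_reverse]
  exact h.2
end
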